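/- For every finite simple graph G, the following two assertions are equivalent: (i) every connected induced subgraph H of G with at least one edge satisfies 3·τ_c(H) ≤ 4·τ(H); (ii) G contains no induced subgraph isomorphic to P_5 or C_4. -/

import Mathlib

open SimpleGraph

/-- `C` is a vertex cover of `G`: every edge of `G` has an endpoint in `C`. -/
def _root_.IsVertexCover {V : Type} (G : SimpleGraph V) (C : Set V) : Prop :=
  ∀ ⦃u v : V⦄, G.Adj u v → u ∈ C ∨ v ∈ C

/-- `C` is a connected vertex cover of `G`: a vertex cover inducing a connected subgraph. -/
def IsConnectedVertexCover {V : Type} (G : SimpleGraph V) (C : Set V) : Prop :=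
  _root_.IsVertexCover G C ∧ (G.induce C).Connected

/-- The vertex cover number `τ(G)`. -/
noncomputable def tau {V : Type} (G : SimpleGraph V) : ℕ :=
  sInf {n | ∃ C : Set V, _root_.IsVertexCover G C ∧ C.ncard = n}

/-- The connected vertex cover number `τ_c(G)`. -/
noncomputable def tauc {V : Type} (G : SimpleGraph V) : ℕ :=
  sInf {n | ∃ C : Set V, IsConnectedVertexCover G C ∧ C.ncard = n}

/-- `G` is `H`-free: `G` has no induced subgraph isomorphic to `H`
(equivalently, there is no graph embedding of `H` into `G`). -/
def HFree {W V : Type} (H : SimpleGraph W) (G : SimpleGraph V) : Prop :=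
  IsEmpty (H ↪g G)

namespace PoC

variable {V W : Type}

/-- step relation inside a set -/
def stepRel (H : SimpleGraph V) (C : Set V) (a b : V) : Prop := a ∈ C ∧ b ∈ C ∧ H.Adj a b

/-- reachability inside a set -/
def RC (H : SimpleGraph V) (C : Set V) : V → V → Prop := Relation.ReflTransGen (stepRel H C)

lemma RC.symm {H : SimpleGraph V} {C : Set V} {a b : V} (h : RC H C a b) : RC H C b a :=
  by haveI : Std.Symm (stepRel H C) := ⟨fun _ _ h => ⟨h.2.1, h.1, h.2.2.symm⟩⟩
     exact Relation.ReflTransGen.stdSymm.symm _ _ h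

lemma RC.trans {H : SimpleGraph V} {C : Set V} {a b c : V} (h : RC H C a b) (h' : RC H C b c) :
    RC H C a c := Relation.ReflTransGen.trans h h'

lemma RC.mem {H : SimpleGraph V} {C : Set V} {a b : V} (h : RC H C a b) (ha : a ∈ C) : b ∈ C := by
  induction h with
  | refl => exact ha
  | tail _ h ih => exact h.2.1

/-- set of cover vertices reachable from `y` after one hop into the cover -/
def Aset (H : SimpleGraph V) (C : Set V) (y : V) : Set V :=
  {x | x ∈ C ∧ ∃ u, H.Adj y u ∧ u ∈ C ∧ RC H C u x}

lemma Aset.subset {H : SimpleGraph V} {C : Set V} {y : V} : Aset H C y ⊆ C := fun _ h => h.1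

lemma Aset.of_adj {H : SimpleGraph V} {C : Set V} {y u : V} (h : H.Adj y u) (hu : u ∈ C) :
    u ∈ Aset H C y := ⟨hu, u, h, hu, Relation.ReflTransGen.refl⟩

lemma Aset.closure {H : SimpleGraph V} {C : Set V} {y x x' : V} (hx : x ∈ Aset H C y)
    (h : RC H C x x') : x' ∈ Aset H C y := by
  obtain ⟨hxC, u, h1, h2, h3⟩ := hx
  exact ⟨h.mem hxC, u, h1, h2, h3.trans h⟩

lemma Aset.adj_closure {H : SimpleGraph V} {C : Set V} {y x x' : V} (hx : x ∈ Aset H C y)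
    (h : H.Adj x x') (hx' : x' ∈ C) : x' ∈ Aset H C y :=
  Aset.closure hx (Relation.ReflTransGen.single ⟨hx.1, hx', h⟩)

/-- two vertices outside a cover are non-adjacent -/
lemma not_adj_outside {H : SimpleGraph V} {C : Set V} (hC : _root_.IsVertexCover H C) {y y' : V}
    (hy : y ∉ C) (hy' : y' ∉ C) : ¬H.Adj y y' := fun h => (hC h).elim hy hy'

/-- from a 5-vertex induced-path pattern, contradiction with P5-freeness -/
lemma p5_pattern {H : SimpleGraph V} (hfree : HFree (pathGraph 5) H) {a b c d e : V}
    (h1 : H.Adj a b) (h2 : H.Adj b c) (h3 : H.Adj c d) (h4 : H.Adj d e)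
    (n1 : ¬H.Adj a c) (n2 : ¬H.Adj a d) (n3 : ¬H.Adj a e) (n4 : ¬H.Adj b d)
    (n5 : ¬H.Adj b e) (n6 : ¬H.Adj c e) : False := by
  have d12 : a ≠ b := h1.ne
  have d23 : b ≠ c := h2.ne
  have d34 : c ≠ d := h3.ne
  have d45 : d ≠ e := h4.ne
  have d13 : a ≠ c := by rintro rfl; exact n2 h3
  have d14 : a ≠ d := by rintro rfl; exact n3 h4
  have d15 : a ≠ e := by rintro rfl; exact n2 h4.symm
  have d24 : b ≠ d := by rintro rfl; exact n5 h4
  have d25 : b ≠ e := by rintro rfl; exact n4 h4.symm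
  have d35 : c ≠ e := by rintro rfl; exact n5 h2
  refine hfree.elim ⟨⟨![a,b,c,d,e], ?_⟩, ?_⟩
  · intro i j hij
    fin_cases i <;> fin_cases j <;> simp_all
  · intro i j
    fin_cases i <;> fin_cases j <;>
      simp only [Matrix.cons_val', Matrix.cons_val_zero, Matrix.cons_val_one, Matrix.head_cons,
        Matrix.head_fin_const, Matrix.cons_val_fin_one, Matrix.cons_val_two, Matrix.cons_val_three,
        Matrix.cons_val_succ, Fin.isValue] <;>
      first
        | exact iff_of_true h1 (by simp [pathGraph_adj]; try decide)
        | exact iff_of_true h1.symm (by simp [pathGraph_adj]; try decide)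
        | exact iff_of_true h2 (by simp [pathGraph_adj]; try decide)
        | exact iff_of_true h2.symm (by simp [pathGraph_adj]; try decide)
        | exact iff_of_true h3 (by simp [pathGraph_adj]; try decide)
        | exact iff_of_true h3.symm (by simp [pathGraph_adj]; try decide)
        | exact iff_of_true h4 (by simp [pathGraph_adj]; try decide)
        | exact iff_of_true h4.symm (by simp [pathGraph_adj]; try decide)
        | exact iff_of_false (H.loopless.irrefl _) (by simp [pathGraph_adj]; try decide)
        | exact iff_of_false n1 (by simp [pathGraph_adj]; try decide)
        | exact iff_of_false (fun h => n1 h.symm) (by simp [pathGraph_adj]; try decide)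
        | exact iff_of_false n2 (by simp [pathGraph_adj]; try decide)
        | exact iff_of_false (fun h => n2 h.symm) (by simp [pathGraph_adj]; try decide)
        | exact iff_of_false n3 (by simp [pathGraph_adj]; try decide)
        | exact iff_of_false (fun h => n3 h.symm) (by simp [pathGraph_adj]; try decide)
        | exact iff_of_false n4 (by simp [pathGraph_adj]; try decide)
        | exact iff_of_false (fun h => n4 h.symm) (by simp [pathGraph_adj]; try decide)
        | exact iff_of_false n5 (by simp [pathGraph_adj]; try decide)
        | exact iff_of_false (fun h => n5 h.symm) (by simp [pathGraph_adj]; try decide)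
        | exact iff_of_false n6 (by simp [pathGraph_adj]; try decide)
        | exact iff_of_false (fun h => n6 h.symm) (by simp [pathGraph_adj]; try decide)

/-- from a 4-vertex induced-cycle pattern, contradiction with C4-freeness -/
lemma c4_pattern {H : SimpleGraph V} (hfree : HFree (cycleGraph 4) H) {a b c d : V}
    (h1 : H.Adj a b) (h2 : H.Adj b c) (h3 : H.Adj c d) (h4 : H.Adj d a)
    (n1 : ¬H.Adj a c) (n2 : ¬H.Adj b d) (d13 : a ≠ c) (d24 : b ≠ d) : False := by
  have d12 : a ≠ b := h1.ne
  have d23 : b ≠ c := h2.ne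
  have d34 : c ≠ d := h3.ne
  have d14 : a ≠ d := h4.ne'
  refine hfree.elim ⟨⟨![a,b,c,d], ?_⟩, ?_⟩
  · intro i j hij
    fin_cases i <;> fin_cases j <;> simp_all
  · intro i j
    fin_cases i <;> fin_cases j <;>
      simp only [Matrix.cons_val', Matrix.cons_val_zero, Matrix.cons_val_one, Matrix.head_cons,
        Matrix.head_fin_const, Matrix.cons_val_fin_one, Matrix.cons_val_two, Matrix.cons_val_three,
        Matrix.cons_val_succ, Fin.isValue] <;>
      first
        | exact iff_of_true h1 (by decide)
        | exact iff_of_true h1.symm (by decide)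
        | exact iff_of_true h2 (by decide)
        | exact iff_of_true h2.symm (by decide)
        | exact iff_of_true h3 (by decide)
        | exact iff_of_true h3.symm (by decide)
        | exact iff_of_true h4 (by decide)
        | exact iff_of_true h4.symm (by decide)
        | exact iff_of_false (H.loopless.irrefl _) (by decide)
        | exact iff_of_false n1 (by decide)
        | exact iff_of_false (fun h => n1 h.symm) (by decide)
        | exact iff_of_false n2 (by decide)
        | exact iff_of_false (fun h => n2 h.symm) (by decide)

section NoLink

variable {H : SimpleGraph V} {C : Set V} {y y' u2 x2 : V}

/-- Core induction: there is no chain inside the cover from a neighbour of `y`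
to a neighbour of `y'`, given the side vertices `u2` (adjacent to `y`, not in `A(y')`). -/
lemma no_link {xp : V} (hfree : HFree (pathGraph 5) H) (hC : _root_.IsVertexCover H C)
    (hy : y ∉ C) (hy' : y' ∉ C)
    (hu2 : H.Adj y u2) (hu2C : u2 ∈ C) (hu2A : u2 ∉ Aset H C y')
    (hxp : H.Adj y' xp) (hxpC : xp ∈ C) (hxpA : xp ∉ Aset H C y) :
    ∀ (n : ℕ) (u1 : V) (l : List V), l.length ≤ n → H.Adj y u1 → u1 ∈ C →
      List.Chain (stepRel H C) u1 l →
      H.Adj y' ((u1 :: l).getLast (List.cons_ne_nil _ _)) → False := by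
  have hyy' : ¬H.Adj y y' := not_adj_outside hC hy hy'
  have case0 : ∀ u1, H.Adj y u1 → u1 ∈ C → H.Adj y' u1 → False := by
    intro u1 h1 h1C hadj
    have u1A : u1 ∈ Aset H C y' := Aset.of_adj hadj h1C
    have u1Ay : u1 ∈ Aset H C y := Aset.of_adj h1 h1C
    exact p5_pattern hfree hu2.symm h1 hadj.symm hxp
      (fun h => hu2A (Aset.adj_closure u1A h.symm hu2C))
      (fun h => hu2A (Aset.of_adj h.symm hu2C))
      (fun h => hu2A (Aset.adj_closure (Aset.of_adj hxp hxpC) h.symm hu2C))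
      hyy'
      (fun h => hxpA (Aset.of_adj h hxpC))
      (fun h => hxpA (Aset.adj_closure u1Ay h hxpC))
  intro n
  induction n with
  | zero =>
    intro u1 l hlen h1 h1C hchain hlast
    have hl : l = [] := List.length_eq_zero_iff.mp (Nat.le_zero.mp hlen)
    subst hl
    exact case0 u1 h1 h1C (by simpa using hlast)
  | succ n ih =>
    intro u1 l hlen h1 h1C hchain hlast
    by_cases hadj : H.Adj y' u1
    · exact case0 u1 h1 h1C hadj
    cases l with
    | nil => exact hadj (by simpa using hlast)
    | cons q1 l' =>
      obtain ⟨hs1, hchain'⟩ := List.chain_cons.mp hchain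
      have hq1C : q1 ∈ C := hs1.2.1
      have hlast' : H.Adj y' ((q1 :: l').getLast (List.cons_ne_nil _ _)) := by
        rwa [List.getLast_cons (List.cons_ne_nil _ _)] at hlast
      have hRCq1 : RC H C q1 ((q1 :: l').getLast (List.cons_ne_nil _ _)) :=
        List.relationReflTransGen_of_exists_isChain_cons l' hchain' rfl
      have hLC : ((q1 :: l').getLast (List.cons_ne_nil _ _)) ∈ C := hRCq1.mem hq1C
      have hq1A : q1 ∈ Aset H C y' := ⟨hq1C, _, hlast', hLC, hRCq1.symm⟩
      have hu1A : u1 ∈ Aset H C y' :=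
        ⟨h1C, _, hlast', hLC, RC.symm (Relation.ReflTransGen.head hs1 hRCq1)⟩
      by_cases hyq1 : H.Adj y q1
      · refine ih q1 l' ?_ hyq1 hq1C hchain' hlast'
        simp only [List.length_cons] at hlen; omega
      · by_cases hy'q1 : H.Adj y' q1
        · exact p5_pattern hfree hu2.symm h1 hs1.2.2 hy'q1.symm
            (fun h => hu2A (Aset.adj_closure hu1A h.symm hu2C))
            (fun h => hu2A (Aset.adj_closure hq1A h.symm hu2C))
            (fun h => hu2A (Aset.of_adj h.symm hu2C))
            hyq1 hyy' (fun h => hadj h.symm)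
        · cases l' with
          | nil => exact hy'q1 (by simpa using hlast')
          | cons q2 l'' =>
            obtain ⟨hs2, hchain''⟩ := List.chain_cons.mp hchain'
            have hq2C : q2 ∈ C := hs2.2.1
            have hlast'' : H.Adj y' ((q2 :: l'').getLast (List.cons_ne_nil _ _)) := by
              rwa [List.getLast_cons (List.cons_ne_nil _ _)] at hlast'
            by_cases hyq2 : H.Adj y q2
            · refine ih q2 l'' ?_ hyq2 hq2C hchain'' hlast''
              simp only [List.length_cons] at hlen; omega
            · by_cases hu1q2 : H.Adj u1 q2
              · refine ih u1 (q2 :: l'') ?_ h1 h1C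
                  (List.chain_cons.mpr ⟨⟨h1C, hq2C, hu1q2⟩, hchain''⟩)
                  (by rwa [List.getLast_cons (List.cons_ne_nil _ _)])
                simp only [List.length_cons] at hlen ⊢; omega
              · have hRCq2 : RC H C q2 ((q2 :: l'').getLast (List.cons_ne_nil _ _)) :=
                  List.relationReflTransGen_of_exists_isChain_cons l'' hchain'' rfl
                have hLC2 : ((q2 :: l'').getLast (List.cons_ne_nil _ _)) ∈ C := hRCq2.mem hq2C
                have hq2A : q2 ∈ Aset H C y' := ⟨hq2C, _, hlast'', hLC2, hRCq2.symm⟩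
                exact p5_pattern hfree hu2.symm h1 hs1.2.2 hs2.2.2
                  (fun h => hu2A (Aset.adj_closure hu1A h.symm hu2C))
                  (fun h => hu2A (Aset.adj_closure hq1A h.symm hu2C))
                  (fun h => hu2A (Aset.adj_closure hq2A h.symm hu2C))
                  hyq1 hyq2 hu1q2

end NoLink

section Max

variable {H : SimpleGraph V} {C : Set V}

/-- there exists an outside vertex seeing all of the cover through the cover,
provided the graph is connected, P5-free, and the cover is proper -/
lemma exists_dominator [Fintype V] (hconn : H.Connected) (hfree : HFree (pathGraph 5) H)
    (hC : _root_.IsVertexCover H C) {y0 : V} (hy0 : y0 ∉ C) :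
    ∃ y, y ∉ C ∧ ∀ x ∈ C, x ∈ Aset H C y := by
  classical
  obtain ⟨y, hyC, hmax⟩ : ∃ y, y ∉ C ∧ ∀ z, z ∉ C →
      (Aset H C z).ncard ≤ (Aset H C y).ncard := by
    obtain ⟨y, hy1, hy2⟩ := Finset.exists_max_image (Finset.univ.filter (· ∉ C))
      (fun z => (Aset H C z).ncard) ⟨y0, by simp [hy0]⟩
    exact ⟨y, by simpa using hy1, fun z hz => hy2 z (by simp [hz])⟩
  refine ⟨y, hyC, ?_⟩
  by_contra hnot
  push_neg at hnot
  obtain ⟨x0, hx0C, hx0A⟩ := hnot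
  have hyx0 : y ≠ x0 := fun h => hyC (h ▸ hx0C)
  have hAy_ne : (Aset H C y).Nonempty := by
    obtain ⟨w⟩ := hconn.preconnected y x0
    cases w with
    | nil => exact absurd rfl hyx0
    | cons h p =>
      rcases hC h with h' | h'
      · exact absurd h' hyC
      · exact ⟨_, Aset.of_adj h h'⟩
  set T : Set ℕ :=
    {n | ∃ a, a ∈ Aset H C y ∧ ∃ z, z ∈ C ∧ z ∉ Aset H C y ∧ ∃ w : H.Walk a z, w.length = n}
    with hT
  have hTne : T.Nonempty := by
    obtain ⟨a, ha⟩ := hAy_ne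
    obtain ⟨w⟩ := hconn.preconnected a x0
    exact ⟨w.length, a, ha, x0, hx0C, hx0A, w, rfl⟩
  obtain ⟨a, haA, z, hzC, hzA, w, hw⟩ := Nat.sInf_mem hTne
  cases w with
  | nil => exact hzA haA
  | @cons _ b _ hab p =>
    simp only [SimpleGraph.Walk.length_cons] at hw
    by_cases hbC : b ∈ C
    · have hbA : b ∈ Aset H C y := Aset.adj_closure haA hab hbC
      have hm : p.length ∈ T := ⟨b, hbA, z, hzC, hzA, p, rfl⟩
      have := Nat.sInf_le hm
      omega
    · by_cases hby : b = y
      · subst hby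
        cases p with
        | nil => exact hbC hzC
        | @cons _ c2 _ h2 p2 =>
          simp only [SimpleGraph.Walk.length_cons] at hw
          have hc2C : c2 ∈ C := (hC h2).resolve_left hbC
          have hc2A : c2 ∈ Aset H C b := Aset.of_adj h2 hc2C
          have hm : p2.length ∈ T := ⟨c2, hc2A, z, hzC, hzA, p2, rfl⟩
          have := Nat.sInf_le hm
          omega
      · cases p with
        | nil => exact hbC hzC
        | @cons _ c2 _ h2 p2 =>
          simp only [SimpleGraph.Walk.length_cons] at hw
          have hc2C : c2 ∈ C := (hC h2).resolve_left hbC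
          by_cases hc2A : c2 ∈ Aset H C y
          · have hm : p2.length ∈ T := ⟨c2, hc2A, z, hzC, hzA, p2, rfl⟩
            have := Nat.sInf_le hm
            omega
          · have hxpA' : c2 ∈ Aset H C b := Aset.of_adj h2 hc2C
            have hsub : ¬ (Aset H C y ⊆ Aset H C b) := by
              intro hsub
              have hlt : (Aset H C y).ncard < (Aset H C b).ncard :=
                Set.ncard_lt_ncard ⟨hsub, fun hsup => hc2A (hsup hxpA')⟩ (Set.toFinite _)
              exact absurd (hmax b hbC) (by omega)
            obtain ⟨x2, hx2A, hx2B⟩ := Set.not_subset.mp hsub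
            obtain ⟨hx2C, u2, hyu2, hu2C, hRC⟩ := hx2A
            have hu2B : u2 ∉ Aset H C b := fun h => hx2B (Aset.closure h hRC)
            obtain ⟨haC, u1, hyu1, hu1C, hRCa⟩ := haA
            obtain ⟨l, hl1, hl2⟩ := List.exists_isChain_cons_of_relationReflTransGen hRCa
            exact no_link hfree hC hyC hbC hyu2 hu2C hu2B h2 hc2C hc2A
              l.length u1 l le_rfl hyu1 hu1C hl1 (by rw [hl2]; exact hab.symm)

end Max

/-- bridge: relation-connectivity gives induced-subgraph connectivity -/
lemma connected_of_RC {H : SimpleGraph V} {C' : Set V} (hne : C'.Nonempty)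
    (h : ∀ a ∈ C', ∀ b ∈ C', RC H C' a b) : (H.induce C').Connected := by
  have hpre : (H.induce C').Preconnected := by
    rintro ⟨a, ha⟩ ⟨b, hb⟩
    have hr := h a ha b hb
    clear h
    revert hb
    induction hr with
    | refl => intro hb; exact Reachable.refl _
    | @tail x c hx hstep ih =>
      intro hc
      refine (ih hstep.1).trans (SimpleGraph.Adj.reachable ?_)
      exact hstep.2.2
  haveI := hne.to_subtype
  exact ⟨hpre⟩

/-- a walk in `H` gives RC-connectivity on `univ` -/
lemma univ_RC {H : SimpleGraph V} (hconn : H.Connected) (a b : V) :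
    RC H Set.univ a b := by
  obtain ⟨w⟩ := hconn.preconnected a b
  induction w with
  | nil => exact Relation.ReflTransGen.refl
  | cons h _ ih => exact Relation.ReflTransGen.head ⟨trivial, trivial, h⟩ ih

section Iso

variable {A : SimpleGraph V} {B : SimpleGraph W}

lemma isVertexCover_image (e : A ≃g B) {C : Set V} (h : _root_.IsVertexCover A C) :
    _root_.IsVertexCover B (e '' C) := by
  intro u v huv
  have : A.Adj (e.symm u) (e.symm v) := by
    rw [← e.map_adj_iff]; simpa using huv
  rcases h this with h' | h'
  · exact Or.inl ⟨e.symm u, h', by simp⟩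
  · exact Or.inr ⟨e.symm v, h', by simp⟩

/-- induced subgraph on image through iso -/
noncomputable def induceIso (e : A ≃g B) (C : Set V) : A.induce C ≃g B.induce (e '' C) where
  toEquiv := e.toEquiv.image C
  map_rel_iff' := by
    rintro ⟨x, hx⟩ ⟨y, hy⟩
    simp only [Equiv.image, comap_adj, Function.Embedding.coe_subtype, Equiv.coe_fn_mk]
    exact e.map_adj_iff

lemma isConnectedVertexCover_image (e : A ≃g B) {C : Set V} (h : IsConnectedVertexCover A C) :
    IsConnectedVertexCover B (e '' C) :=
  ⟨isVertexCover_image e h.1, (Iso.connected_iff (induceIso e C)).mp h.2⟩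

lemma tau_iso (e : A ≃g B) : tau A = tau B := by
  unfold tau
  congr 1
  ext n
  constructor
  · rintro ⟨C, hC, rfl⟩
    exact ⟨e '' C, isVertexCover_image e hC,
      Set.ncard_image_of_injective _ (EquivLike.injective e)⟩
  · rintro ⟨C, hC, rfl⟩
    exact ⟨e.symm '' C, isVertexCover_image e.symm hC,
      Set.ncard_image_of_injective _ (EquivLike.injective e.symm)⟩

lemma tauc_iso (e : A ≃g B) : tauc A = tauc B := by
  unfold tauc
  congr 1
  ext n
  constructor
  · rintro ⟨C, hC, rfl⟩
    exact ⟨e '' C, isConnectedVertexCover_image e hC,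
      Set.ncard_image_of_injective _ (EquivLike.injective e)⟩
  · rintro ⟨C, hC, rfl⟩
    exact ⟨e.symm '' C, isConnectedVertexCover_image e.symm hC,
      Set.ncard_image_of_injective _ (EquivLike.injective e.symm)⟩

end Iso

lemma connected_singleton (H : SimpleGraph V) (a : V) : (H.induce {a}).Connected := by
  refine connected_of_RC ⟨a, rfl⟩ ?_
  rintro x (rfl : x = a) z (rfl : z = x)
  exact Relation.ReflTransGen.refl

lemma connected_pair {H : SimpleGraph V} {a b : V} (hab : H.Adj a b) :
    (H.induce {a, b}).Connected := by
  refine connected_of_RC ⟨a, by simp⟩ ?_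
  intro x hx z hz
  have hstep : RC H {a, b} a b :=
    Relation.ReflTransGen.single ⟨by simp, by simp, hab⟩
  simp only [Set.mem_insert_iff, Set.mem_singleton_iff] at hx hz
  rcases hx with rfl | rfl <;> rcases hz with rfl | rfl
  · exact Relation.ReflTransGen.refl
  · exact hstep
  · exact hstep.symm
  · exact Relation.ReflTransGen.refl

/-- The key lemma: a connected `(P₅, C₄)`-free graph with an edge satisfies `3τ_c ≤ 4τ`. -/
lemma key {W : Type} [Fintype W] (H : SimpleGraph W) (hconn : H.Connected)
    (hedge : H.edgeSet.Nonempty) (h5 : HFree (pathGraph 5) H)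
    (h4 : HFree (cycleGraph 4) H) : 3 * tauc H ≤ 4 * tau H := by
  classical
  have hTne : {n | ∃ C : Set W, _root_.IsVertexCover H C ∧ C.ncard = n}.Nonempty :=
    ⟨(Set.univ : Set W).ncard, Set.univ, fun u v _ => Or.inl trivial, rfl⟩
  obtain ⟨C, hC, hCcard⟩ : ∃ C : Set W, _root_.IsVertexCover H C ∧ C.ncard = tau H :=
    Nat.sInf_mem hTne
  have tauc_le : ∀ C' : Set W, _root_.IsVertexCover H C' → (H.induce C').Connected →
      tauc H ≤ C'.ncard := fun C' h1 h2 => Nat.sInf_le ⟨C', ⟨h1, h2⟩, rfl⟩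
  have hCne : C.Nonempty := by
    obtain ⟨e, he⟩ := hedge
    induction e with
    | _ u v => exact (hC (H.mem_edgeSet.mp he)).elim (fun h => ⟨u, h⟩) (fun h => ⟨v, h⟩)
  have hpos : 0 < C.ncard := (Set.ncard_pos (Set.toFinite C)).mpr hCne
  by_cases h1card : C.ncard = 1
  · obtain ⟨a, rfl⟩ := Set.ncard_eq_one.mp h1card
    have := tauc_le {a} hC (connected_singleton H a)
    have h2 : ({a} : Set W).ncard = 1 := Set.ncard_singleton a
    omega
  by_cases h2card : C.ncard = 2
  · obtain ⟨a, b, hab, rfl⟩ := Set.ncard_eq_two.mp h2card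
    by_cases hadj : H.Adj a b
    · have := tauc_le _ hC (connected_pair hadj)
      omega
    · -- C4/P5 endgame for a two-element disconnected cover
      have hex : ∃ y0, y0 ∉ ({a, b} : Set W) := by
        by_contra h
        push_neg at h
        obtain ⟨e, he⟩ := hedge
        induction e with
        | _ u v =>
          have huv : H.Adj u v := H.mem_edgeSet.mp he
          have hu := h u
          have hv := h v
          simp only [Set.mem_insert_iff, Set.mem_singleton_iff] at hu hv
          rcases hu with rfl | rfl <;> rcases hv with rfl | rfl
          · exact H.loopless.irrefl _ huv
          · exact hadj huv
          · exact hadj huv.symm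
          · exact H.loopless.irrefl _ huv
      obtain ⟨y0, hy0⟩ := hex
      obtain ⟨y, hyC, hdom⟩ := exists_dominator hconn h5 hC hy0
      have hstepE : ∀ p q : W, stepRel H {a, b} p q → False := by
        rintro p q ⟨hp, hq, hpq⟩
        simp only [Set.mem_insert_iff, Set.mem_singleton_iff] at hp hq
        rcases hp with rfl | rfl <;> rcases hq with rfl | rfl
        exacts [H.loopless.irrefl _ hpq, hadj hpq, hadj hpq.symm, H.loopless.irrefl _ hpq]
      have hRCeq : ∀ p q : W, RC H {a, b} p q → p = q := by
        intro p q h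
        induction h with
        | refl => rfl
        | tail h1 h2 ih => exact absurd h2 (hstepE _ _)
      have hya : H.Adj y a := by
        obtain ⟨-, u, hyu, huC, hRC⟩ := hdom a (by simp)
        rwa [hRCeq _ _ hRC] at hyu
      have hyb : H.Adj y b := by
        obtain ⟨-, u, hyu, huC, hRC⟩ := hdom b (by simp)
        rwa [hRCeq _ _ hRC] at hyu
      have hay : a ≠ y := by rintro rfl; exact hyC (by simp)
      have hby : b ≠ y := by rintro rfl; exact hyC (by simp)
      by_cases hNb : ∀ z, H.Adj b z → z = y
      · have hcov : _root_.IsVertexCover H {a, y} := by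
          intro u v huv
          rcases hC huv with hu | hv
          · simp only [Set.mem_insert_iff, Set.mem_singleton_iff] at hu
            rcases hu with rfl | rfl
            · exact Or.inl (by simp)
            · exact Or.inr (by rw [hNb v huv]; simp)
          · simp only [Set.mem_insert_iff, Set.mem_singleton_iff] at hv
            rcases hv with rfl | rfl
            · exact Or.inr (by simp)
            · exact Or.inl (by rw [hNb u huv.symm]; simp)
        have h1 := tauc_le _ hcov (connected_pair hya.symm)
        have h2 : ({a, y} : Set W).ncard = 2 := Set.ncard_pair hay
        omega
      by_cases hNa : ∀ z, H.Adj a z → z = y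
      · have hcov : _root_.IsVertexCover H {b, y} := by
          intro u v huv
          rcases hC huv with hu | hv
          · simp only [Set.mem_insert_iff, Set.mem_singleton_iff] at hu
            rcases hu with rfl | rfl
            · exact Or.inr (by rw [hNa v huv]; simp)
            · exact Or.inl (by simp)
          · simp only [Set.mem_insert_iff, Set.mem_singleton_iff] at hv
            rcases hv with rfl | rfl
            · exact Or.inl (by rw [hNa u huv.symm]; simp)
            · exact Or.inr (by simp)
        have h1 := tauc_le _ hcov (connected_pair hyb.symm)
        have h2 : ({b, y} : Set W).ncard = 2 := Set.ncard_pair hby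
        omega
      · exfalso
        push_neg at hNb hNa
        obtain ⟨z, hbz, hzy⟩ := hNb
        obtain ⟨w, haw, hwy⟩ := hNa
        have hzC : z ∉ ({a, b} : Set W) := by
          intro h
          simp only [Set.mem_insert_iff, Set.mem_singleton_iff] at h
          rcases h with rfl | rfl
          · exact hadj hbz.symm
          · exact H.loopless.irrefl _ hbz
        have hwC : w ∉ ({a, b} : Set W) := by
          intro h
          simp only [Set.mem_insert_iff, Set.mem_singleton_iff] at h
          rcases h with rfl | rfl
          · exact H.loopless.irrefl _ haw
          · exact hadj haw
        by_cases hwz : w = z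
        · subst hwz
          exact c4_pattern h4 hya.symm hyb hbz haw.symm hadj
            (not_adj_outside hC hyC hwC) hab (Ne.symm hwy)
        · by_cases hwb : H.Adj w b
          · exact c4_pattern h4 hya.symm hyb hwb.symm haw.symm hadj
              (not_adj_outside hC hyC hwC) hab (Ne.symm hwy)
          · by_cases hza : H.Adj z a
            · exact c4_pattern h4 hya.symm hyb hbz hza hadj
                (not_adj_outside hC hyC hzC) hab (Ne.symm hzy)
            · exact p5_pattern h5 haw.symm hya.symm hyb hbz
                (not_adj_outside hC hwC hyC) hwb
                (not_adj_outside hC hwC hzC) hadj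
                (fun h => hza h.symm) (not_adj_outside hC hyC hzC)
  · -- C.ncard ≥ 3
    by_cases hCuniv : C = Set.univ
    · have hc : (H.induce C).Connected := by
        refine connected_of_RC hCne ?_
        intro p hp q hq
        have := univ_RC hconn p q
        subst hCuniv
        exact this
      have := tauc_le C hC hc
      omega
    · obtain ⟨y0, hy0⟩ := (Set.ne_univ_iff_exists_notMem C).mp hCuniv
      obtain ⟨y, hyC, hdom⟩ := exists_dominator hconn h5 hC hy0
      have hcov' : _root_.IsVertexCover H (insert y C) := fun u v h =>
        (hC h).imp (Set.mem_insert_of_mem y) (Set.mem_insert_of_mem y)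
      have hconn' : (H.induce (insert y C)).Connected := by
        refine connected_of_RC ⟨y, Set.mem_insert _ _⟩ ?_
        have hyx : ∀ c ∈ insert y C, RC H (insert y C) y c := by
          intro c hc
          rcases Set.mem_insert_iff.mp hc with rfl | hc
          · exact Relation.ReflTransGen.refl
          · obtain ⟨-, u, hyu, huC, hRC⟩ := hdom c hc
            refine Relation.ReflTransGen.head
              ⟨Set.mem_insert _ _, Set.mem_insert_of_mem _ huC, hyu⟩ ?_
            exact Relation.ReflTransGen.mono
              (fun p q hpq => ⟨Set.mem_insert_of_mem _ hpq.1,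
                Set.mem_insert_of_mem _ hpq.2.1, hpq.2.2⟩) _ _ hRC
        intro p hp q hq
        exact (RC.symm (hyx p hp)).trans (hyx q hq)
      have h1 := tauc_le _ hcov' hconn'
      have h2 : (insert y C).ncard ≤ C.ncard + 1 := Set.ncard_insert_le _ _
      omega

noncomputable def isoOfEmbedding {A : SimpleGraph V} {B : SimpleGraph W} (f : A ↪g B) :
    A ≃g B.induce (Set.range f) where
  toEquiv := Equiv.ofInjective f f.injective
  map_rel_iff' := by
    intro i j
    simpa using f.map_adj_iff

lemma pair_not_connected {A : SimpleGraph V} {a b : V} (hab : a ≠ b) (hnadj : ¬A.Adj a b) :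
    ¬(A.induce {a, b}).Connected := by
  intro h
  have hbot : ∀ u v : ↥({a, b} : Set V), ¬(A.induce {a, b}).Adj u v := by
    rintro ⟨u, hu⟩ ⟨v, hv⟩ hadj
    simp only [Set.mem_insert_iff, Set.mem_singleton_iff] at hu hv
    have hA : A.Adj u v := hadj
    rcases hu with rfl | rfl <;> rcases hv with rfl | rfl
    · exact A.loopless.irrefl _ hA
    · exact hnadj hA
    · exact hnadj hA.symm
    · exact A.loopless.irrefl _ hA
  have heq : ∀ u v : ↥({a, b} : Set V), (A.induce {a, b}).Walk u v → u = v := by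
    intro u v w
    induction w with
    | nil => rfl
    | cons h' p ih => exact absurd h' (hbot _ _)
  obtain ⟨w⟩ := h.preconnected ⟨a, by simp⟩ ⟨b, by simp⟩
  exact hab (congrArg Subtype.val (heq _ _ w))

lemma c4_connected : (cycleGraph 4).Connected := by
  have h0 : ∀ i : Fin 4, (cycleGraph 4).Reachable 0 i := by
    intro i
    fin_cases i
    · exact Reachable.refl _
    · exact SimpleGraph.Adj.reachable (by decide)
    · exact (SimpleGraph.Adj.reachable
        (show (cycleGraph 4).Adj 0 1 by decide)).trans (SimpleGraph.Adj.reachable (by decide))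
    · exact SimpleGraph.Adj.reachable (by decide)
  exact ⟨fun u v => ((h0 u).symm.trans (h0 v))⟩

lemma tau_pathGraph_le : tau (pathGraph 5) ≤ 2 := by
  apply Nat.sInf_le
  refine ⟨{1, 3}, ?_, Set.ncard_pair (by decide)⟩
  intro u v huv
  revert huv
  fin_cases u <;> fin_cases v <;> intro huv <;>
    simp only [Set.mem_insert_iff, Set.mem_singleton_iff] <;>
    first
      | exact absurd huv (by rw [pathGraph_adj]; decide)
      | decide

lemma tau_cycleGraph_le : tau (cycleGraph 4) ≤ 2 := by
  apply Nat.sInf_le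
  refine ⟨{0, 2}, ?_, Set.ncard_pair (by decide)⟩
  intro u v huv
  revert huv
  fin_cases u <;> fin_cases v <;> intro huv <;>
    simp only [Set.mem_insert_iff, Set.mem_singleton_iff] <;>
    first
      | exact absurd huv (by decide)
      | decide

lemma tauc_pathGraph_ge : 3 ≤ tauc (pathGraph 5) := by
  classical
  have hne : {n | ∃ C, IsConnectedVertexCover (pathGraph 5) C ∧ C.ncard = n}.Nonempty := by
    refine ⟨(Set.univ : Set (Fin 5)).ncard, Set.univ, ⟨fun u v _ => Or.inl trivial, ?_⟩, rfl⟩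
    exact (Iso.connected_iff (induceUnivIso _)).mpr (pathGraph_connected 4)
  obtain ⟨C, ⟨hCcov, hCconn⟩, hCcard⟩ :
      ∃ C : Set (Fin 5), IsConnectedVertexCover (pathGraph 5) C ∧ C.ncard = tauc (pathGraph 5) :=
    Nat.sInf_mem hne
  by_contra hlt
  push_neg at hlt
  have hle : C.ncard ≤ 2 := by omega
  have c01 := hCcov (show (pathGraph 5).Adj 0 1 by rw [pathGraph_adj]; decide)
  have c12 := hCcov (show (pathGraph 5).Adj 1 2 by rw [pathGraph_adj]; decide)
  have c23 := hCcov (show (pathGraph 5).Adj 2 3 by rw [pathGraph_adj]; decide)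
  have c34 := hCcov (show (pathGraph 5).Adj 3 4 by rw [pathGraph_adj]; decide)
  have hpair : ∀ s t : Fin 5, s ∈ C → t ∈ C → s ≠ t → C = {s, t} := by
    intro s t hs ht hst
    refine (Set.eq_of_subset_of_ncard_le ?_ ?_ (Set.toFinite C)).symm
    · intro x hx
      simp only [Set.mem_insert_iff, Set.mem_singleton_iff] at hx
      rcases hx with rfl | rfl
      exacts [hs, ht]
    · rw [Set.ncard_pair hst]; exact hle
  rcases c01 with h0 | h1
  · rcases c34 with h3 | h4
    · rw [hpair 0 3 h0 h3 (by decide)] at c12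
      simp only [Set.mem_insert_iff, Set.mem_singleton_iff] at c12
      rcases c12 with h | h <;> revert h <;> decide
    · rw [hpair 0 4 h0 h4 (by decide)] at c12
      simp only [Set.mem_insert_iff, Set.mem_singleton_iff] at c12
      rcases c12 with h | h <;> revert h <;> decide
  · rcases c34 with h3 | h4
    · exact pair_not_connected (by decide) (by rw [pathGraph_adj]; decide)
        ((hpair 1 3 h1 h3 (by decide)) ▸ hCconn)
    · rw [hpair 1 4 h1 h4 (by decide)] at c23
      simp only [Set.mem_insert_iff, Set.mem_singleton_iff] at c23
      rcases c23 with h | h <;> revert h <;> decide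

lemma tauc_cycleGraph_ge : 3 ≤ tauc (cycleGraph 4) := by
  classical
  have hne : {n | ∃ C, IsConnectedVertexCover (cycleGraph 4) C ∧ C.ncard = n}.Nonempty := by
    refine ⟨(Set.univ : Set (Fin 4)).ncard, Set.univ, ⟨fun u v _ => Or.inl trivial, ?_⟩, rfl⟩
    exact (Iso.connected_iff (induceUnivIso _)).mpr c4_connected
  obtain ⟨C, ⟨hCcov, hCconn⟩, hCcard⟩ :
      ∃ C : Set (Fin 4), IsConnectedVertexCover (cycleGraph 4) C ∧ C.ncard = tauc (cycleGraph 4) :=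
    Nat.sInf_mem hne
  by_contra hlt
  push_neg at hlt
  have hle : C.ncard ≤ 2 := by omega
  have c01 := hCcov (show (cycleGraph 4).Adj 0 1 by decide)
  have c12 := hCcov (show (cycleGraph 4).Adj 1 2 by decide)
  have c23 := hCcov (show (cycleGraph 4).Adj 2 3 by decide)
  have c30 := hCcov (show (cycleGraph 4).Adj 3 0 by decide)
  have hpair : ∀ s t : Fin 4, s ∈ C → t ∈ C → s ≠ t → C = {s, t} := by
    intro s t hs ht hst
    refine (Set.eq_of_subset_of_ncard_le ?_ ?_ (Set.toFinite C)).symm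
    · intro x hx
      simp only [Set.mem_insert_iff, Set.mem_singleton_iff] at hx
      rcases hx with rfl | rfl
      exacts [hs, ht]
    · rw [Set.ncard_pair hst]; exact hle
  rcases c01 with h0 | h1
  · rcases c23 with h2 | h3
    · exact pair_not_connected (by decide) (by decide)
        ((hpair 0 2 h0 h2 (by decide)) ▸ hCconn)
    · rw [hpair 0 3 h0 h3 (by decide)] at c12
      simp only [Set.mem_insert_iff, Set.mem_singleton_iff] at c12
      rcases c12 with h | h <;> revert h <;> decide
  · rcases c23 with h2 | h3
    · rw [hpair 1 2 h1 h2 (by decide)] at c30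
      simp only [Set.mem_insert_iff, Set.mem_singleton_iff] at c30
      rcases c30 with h | h <;> revert h <;> decide
    · exact pair_not_connected (by decide) (by decide)
        ((hpair 1 3 h1 h3 (by decide)) ▸ hCconn)

end PoC

/-- The following are equivalent: (i) every connected induced subgraph `H` of `G` with
at least one edge satisfies `3τ_c(H) ≤ 4τ(H)`; (ii) `G` is `(P₅, C₄)`-free. -/
theorem poc_four_thirds_characterization {V : Type} [Fintype V] (G : SimpleGraph V) :
    (∀ S : Set V, (G.induce S).Connected → (G.induce S).edgeSet.Nonempty →
        3 * tauc (G.induce S) ≤ 4 * tau (G.induce S)) ↔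
      (HFree (SimpleGraph.pathGraph 5) G ∧ HFree (SimpleGraph.cycleGraph 4) G) := by

  constructor
  · intro hmain
    constructor
    · by_contra h5
      have h5' : ¬ IsEmpty (pathGraph 5 ↪g G) := h5
      obtain ⟨f⟩ := not_isEmpty_iff.mp h5'
      have e := PoC.isoOfEmbedding f
      have hconnS : (G.induce (Set.range ⇑f)).Connected :=
        (Iso.connected_iff e).mp (pathGraph_connected 4)
      have hedgeS : (G.induce (Set.range ⇑f)).edgeSet.Nonempty := by
        refine ⟨s(⟨f 0, ⟨0, rfl⟩⟩, ⟨f 1, ⟨1, rfl⟩⟩), ?_⟩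
        exact f.map_adj_iff.mpr (show (pathGraph 5).Adj 0 1 by rw [pathGraph_adj]; decide)
      have h34 := hmain _ hconnS hedgeS
      rw [← PoC.tau_iso e, ← PoC.tauc_iso e] at h34
      have ht := PoC.tau_pathGraph_le
      have htc := PoC.tauc_pathGraph_ge
      omega
    · by_contra h4
      have h4' : ¬ IsEmpty (cycleGraph 4 ↪g G) := h4
      obtain ⟨f⟩ := not_isEmpty_iff.mp h4'
      have e := PoC.isoOfEmbedding f
      have hconnS : (G.induce (Set.range ⇑f)).Connected :=
        (Iso.connected_iff e).mp PoC.c4_connected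
      have hedgeS : (G.induce (Set.range ⇑f)).edgeSet.Nonempty := by
        refine ⟨s(⟨f 0, ⟨0, rfl⟩⟩, ⟨f 1, ⟨1, rfl⟩⟩), ?_⟩
        exact f.map_adj_iff.mpr (show (cycleGraph 4).Adj 0 1 by decide)
      have h34 := hmain _ hconnS hedgeS
      rw [← PoC.tau_iso e, ← PoC.tauc_iso e] at h34
      have ht := PoC.tau_cycleGraph_le
      have htc := PoC.tauc_cycleGraph_ge
      omega
  · rintro ⟨h5, h4⟩ S hconn hedge
    haveI : Fintype ↥S := Fintype.ofFinite ↥S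
    have h5' : IsEmpty (pathGraph 5 ↪g G) := h5
    have h4' : IsEmpty (cycleGraph 4 ↪g G) := h4
    refine PoC.key _ hconn hedge
      ⟨fun f => h5'.false ((SimpleGraph.Embedding.induce S).comp f)⟩
      ⟨fun f => h4'.false ((SimpleGraph.Embedding.induce S).comp f)⟩
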